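/- arXiv:1012.5542 — 2 statements merged into one kernel-verified Lean document; each statement's English description precedes it below -/
import Mathlib

section
/- For each r ≥ 1, the r-norm ‖·‖_{B^r} on pointed k-chains, defined as the infimum of Σ|Δ^{j_i}_{U_i}(p_i;α_i)|_{j_i} over all decompositions A = Σ Δ^{j_i}_{U_i}(p_i;α_i) with 0 ≤ j_i ≤ r, is a seminorm. -/
/-! Pointed chains: finitely supported functions from points of `E` to "k-vectors" in `V`,
difference chains, and the `B^r` norms of J. Harrison's theory of differential chains. -/

open Finsupp Pointwise

variable {E V : Type*} [NormedAddCommGroup E] [NormedSpace ℝ E]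
  [NormedAddCommGroup V] [NormedSpace ℝ V]

/-- The difference chain `Δ^j_U (p; α)`, for a list `U = [u₁,…,u_j]` of vectors. -/
noncomputable def diffChain : List E → E → V → (E →₀ V)
  | [], p, α => Finsupp.single p α
  | u :: U, p, α => Finsupp.mapDomain (· + u) (diffChain U p α) - diffChain U p α

/-- The weight `|Δ^j_U(p;α)|_j := ‖u₁‖⋯‖u_j‖‖α‖` of a difference chain. -/
noncomputable def dweight (U : List E) (α : V) : ℝ := (U.map fun u => ‖u‖).prod * ‖α‖

/-- The `r`-norm `‖A‖_{B^r}` on pointed chains: the infimum of `Σᵢ |Δ^{jᵢ}_{Uᵢ}(pᵢ;αᵢ)|_{jᵢ}`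
over all decompositions `A = Σᵢ Δ^{jᵢ}_{Uᵢ}(pᵢ;αᵢ)` with all `jᵢ ≤ r`. -/
noncomputable def Bnorm (r : ℕ) (A : E →₀ V) : ℝ :=
  sInf {s : ℝ | ∃ L : List (List E × E × V),
    (∀ t ∈ L, t.1.length ≤ r) ∧
    A = (L.map fun t => diffChain t.1 t.2.1 t.2.2).sum ∧
    s = (L.map fun t => dweight t.1 t.2.2).sum}

set_option linter.unusedSectionVars false

lemma dweight_nonneg (U : List E) (α : V) : 0 ≤ dweight U α :=
  mul_nonneg (List.prod_nonneg (by simp)) (norm_nonneg _)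

lemma dweight_smul (c : ℝ) (U : List E) (α : V) :
    dweight U (c • α) = |c| * dweight U α := by
  simp [dweight, norm_smul, Real.norm_eq_abs]; ring

lemma diffChain_smul (c : ℝ) : ∀ (U : List E) (p : E) (α : V),
    diffChain U p (c • α) = c • diffChain U p α
  | [], p, α => by simp [diffChain, Finsupp.smul_single]
  | u :: U, p, α => by
    simp [diffChain, diffChain_smul c U, Finsupp.mapDomain_smul, smul_sub]

/-- The decomposition set. -/
def Bset (r : ℕ) (A : E →₀ V) : Set ℝ :=
  {s : ℝ | ∃ L : List (List E × E × V),
    (∀ t ∈ L, t.1.length ≤ r) ∧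
    A = (L.map fun t => diffChain t.1 t.2.1 t.2.2).sum ∧
    s = (L.map fun t => dweight t.1 t.2.2).sum}

lemma Bnorm_eq (r : ℕ) (A : E →₀ V) : Bnorm r A = sInf (Bset r A) := rfl

lemma Bset_nonneg (r : ℕ) (A : E →₀ V) : ∀ s ∈ Bset r A, (0:ℝ) ≤ s := by
  rintro s ⟨L, -, -, rfl⟩
  apply List.sum_nonneg
  intro x hx
  rw [List.mem_map] at hx
  obtain ⟨t, -, rfl⟩ := hx
  exact dweight_nonneg _ _

lemma Bset_bddBelow (r : ℕ) (A : E →₀ V) : BddBelow (Bset r A) :=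
  ⟨0, fun s hs => Bset_nonneg r A s hs⟩

lemma Bset_nonempty (r : ℕ) (A : E →₀ V) : (Bset r A).Nonempty := by
  refine ⟨_, A.support.toList.map (fun p => (([] : List E), p, A p)), by simp, ?_, rfl⟩
  rw [List.map_map]
  simp only [Function.comp_def]
  rw [show (fun p => diffChain ([]:List E) p (A p)) = fun p => Finsupp.single p (A p)
      from funext fun p => rfl]
  rw [Finset.sum_map_toList]
  exact (Finsupp.sum_single A).symm

lemma list_smul_sum (d : ℝ) (l : List (E →₀ V)) :
    d • l.sum = (l.map (fun x => d • x)).sum := by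
  induction l with
  | nil => simp
  | cons a l ih => simp [smul_add, ih]

lemma Bset_smul (r : ℕ) (A : E →₀ V) (c : ℝ) (hc : c ≠ 0) :
    Bset r (c • A) = (fun x => |c| * x) '' Bset r A := by
  have key : ∀ (d : ℝ) (B : E →₀ V), ∀ s ∈ Bset r B, |d| * s ∈ Bset r (d • B) := by
    rintro d B s ⟨L, hlen, hsum, rfl⟩
    refine ⟨L.map fun t => (t.1, t.2.1, d • t.2.2), ?_, ?_, ?_⟩
    · intro t ht; rw [List.mem_map] at ht; obtain ⟨u, hu, rfl⟩ := ht; exact hlen u hu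
    · rw [hsum, list_smul_sum, List.map_map, List.map_map]
      simp [Function.comp_def, diffChain_smul]
    · rw [List.map_map]
      simp only [Function.comp_def, dweight_smul]
      rw [List.sum_map_mul_left]
  apply Set.eq_of_subset_of_subset
  · intro s hs
    have h2 := key c⁻¹ (c • A) s hs
    rw [smul_smul, inv_mul_cancel₀ hc, one_smul] at h2
    refine ⟨|c⁻¹| * s, h2, ?_⟩
    show |c| * (|c⁻¹| * s) = s
    rw [abs_inv, ← mul_assoc, mul_inv_cancel₀ (abs_ne_zero.2 hc), one_mul]
  · rintro s ⟨t, ht, rfl⟩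
    exact key c A t ht

lemma Bnorm_nonneg (r : ℕ) (A : E →₀ V) : 0 ≤ Bnorm r A :=
  le_csInf (Bset_nonempty r A) (Bset_nonneg r A)

/-- For each `r ≥ 1`, the `r`-norm `‖·‖_{B^r}` on pointed chains is a
seminorm: it is nonnegative, vanishes at `0`, is absolutely homogeneous, and subadditive. -/
theorem Bnorm_is_seminorm (r : ℕ) (hr : 1 ≤ r) :
    (∀ A : E →₀ V, 0 ≤ Bnorm r A) ∧
    Bnorm r (0 : E →₀ V) = 0 ∧
    (∀ (c : ℝ) (A : E →₀ V), Bnorm r (c • A) = |c| * Bnorm r A) ∧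
    (∀ A B : E →₀ V, Bnorm r (A + B) ≤ Bnorm r A + Bnorm r B) := by
  have hzero : Bnorm r (0 : E →₀ V) = 0 := by
    apply le_antisymm
    · apply csInf_le (Bset_bddBelow r 0)
      exact ⟨[], by simp, by simp, by simp⟩
    · exact Bnorm_nonneg r 0
  refine ⟨Bnorm_nonneg r, hzero, ?_, ?_⟩
  · intro c A
    rcases eq_or_ne c 0 with rfl | hc
    · simp [hzero]
    · rw [Bnorm_eq, Bnorm_eq, Bset_smul r A c hc,
        show ((fun x => |c| * x) '' Bset r A) = |c| • Bset r A from rfl,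
        Real.sInf_smul_of_nonneg (abs_nonneg c), smul_eq_mul]
  · intro A B
    have step : ∀ s ∈ Bset r A, ∀ t ∈ Bset r B, Bnorm r (A + B) ≤ s + t := by
      rintro s ⟨L, hL, hAs, rfl⟩ t ⟨M, hM, hBs, rfl⟩
      apply csInf_le (Bset_bddBelow r (A + B))
      refine ⟨L ++ M, ?_, ?_, ?_⟩
      · intro u hu; rcases List.mem_append.1 hu with h | h
        exacts [hL u h, hM u h]
      · rw [List.map_append, List.sum_append, hAs, hBs]
      · rw [List.map_append, List.sum_append]
    have h1 : ∀ t ∈ Bset r B, Bnorm r (A + B) - t ≤ Bnorm r A := by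
      intro t ht
      apply le_csInf (Bset_nonempty r A)
      intro s hs
      linarith [step s hs t ht]
    have h2 : Bnorm r (A + B) - Bnorm r A ≤ Bnorm r B := by
      apply le_csInf (Bset_nonempty r B)
      intro t ht
      linarith [h1 t ht]
    linarith
end

section
/- For every nonzero pointed k-chain A and every r ≥ 0, the r-norm ‖A‖_{B^r} is strictly positive. In particular ‖·‖_{B^r} is a norm on pointed k-chains. -/
/-! Pointed chains: finitely supported functions from points of `E` to "k-vectors" in `V`,
difference chains, and the `B^r` norms of J. Harrison's theory of differential chains. -/

open Finsupp

variable {E V : Type*} [NormedAddCommGroup E] [NormedSpace ℝ E]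
  [NormedAddCommGroup V] [NormedSpace ℝ V]

/-! ### Auxiliary material -/

section Aux

set_option linter.unusedSectionVars false

variable {E' : Type} [NormedAddCommGroup E'] [NormedSpace ℝ E']

/-- Iterated difference operator on functions. -/
noncomputable def iterDiff {F : Type} [NormedAddCommGroup F] [NormedSpace ℝ F] :
    List E' → (E' → F) → (E' → F)
  | [], g => g
  | u :: U, g => fun x => iterDiff U g (x + u) - iterDiff U g x

lemma iterDiff_comp_add {F : Type} [NormedAddCommGroup F] [NormedSpace ℝ F]
    (U : List E') (g : E' → F) (u : E') (x : E') :
    iterDiff U (fun y => g (y + u)) x = iterDiff U g (x + u) := by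
  induction U generalizing x with
  | nil => rfl
  | cons v V ih =>
      simp only [iterDiff, ih]
      rw [add_right_comm]

lemma iterDiff_contDiff {F : Type} [NormedAddCommGroup F] [NormedSpace ℝ F]
    (U : List E') (g : E' → F) (hg : ContDiff ℝ (⊤ : ℕ∞) g) :
    ContDiff ℝ (⊤ : ℕ∞) (iterDiff U g) := by
  induction U with
  | nil => exact hg
  | cons u V ih =>
      exact (ih.comp (contDiff_id.add contDiff_const)).sub ih

lemma fderiv_iterDiff {F : Type} [NormedAddCommGroup F] [NormedSpace ℝ F]
    (U : List E') (g : E' → F) (hg : ContDiff ℝ (⊤ : ℕ∞) g) (x : E') :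
    fderiv ℝ (iterDiff U g) x = iterDiff U (fderiv ℝ g) x := by
  induction U generalizing x with
  | nil => rfl
  | cons u V ih =>
      have hd : Differentiable ℝ (iterDiff V g) :=
        (iterDiff_contDiff V g hg).differentiable (by simp)
      have h1 : HasFDerivAt (fun y => iterDiff V g (y + u))
          (fderiv ℝ (iterDiff V g) (x + u)) x := by
        have := ((hd (x + u)).hasFDerivAt).comp x
          ((hasFDerivAt_id x).add_const u)
        simpa [Function.comp_def] using this
      have h2 : HasFDerivAt (iterDiff V g) (fderiv ℝ (iterDiff V g) x) x :=
        (hd x).hasFDerivAt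
      have : HasFDerivAt (iterDiff (u :: V) g)
          (fderiv ℝ (iterDiff V g) (x + u) - fderiv ℝ (iterDiff V g) x) x := h1.sub h2
      rw [this.fderiv, ih, ih]
      rfl

/-- Key estimate: the `j`-fold difference of `g` is bounded by `‖u₁‖⋯‖u_j‖` times a
uniform bound on the `j`-th derivative of `g`. -/
lemma iterDiff_bound (U : List E') :
    ∀ {F : Type} [NormedAddCommGroup F] [NormedSpace ℝ F] (g : E' → F) (C : ℝ),
      ContDiff ℝ (⊤ : ℕ∞) g → (∀ x, ‖iteratedFDeriv ℝ U.length g x‖ ≤ C) →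
      ∀ p, ‖iterDiff U g p‖ ≤ (U.map fun u => ‖u‖).prod * C := by
  induction U with
  | nil =>
      intro F _ _ g C hg hC p
      simpa [iterDiff, norm_iteratedFDeriv_zero] using hC p
  | cons u V ih =>
      intro F _ _ g C hg hC p
      have hd : Differentiable ℝ (iterDiff V g) :=
        (iterDiff_contDiff V g hg).differentiable (by simp)
      have hC' : ∀ x, ‖iteratedFDeriv ℝ V.length (fderiv ℝ g) x‖ ≤ C := by
        intro x
        rw [norm_iteratedFDeriv_fderiv]
        simpa [List.length_cons] using hC x
      have hfd : ∀ x, ‖fderiv ℝ (iterDiff V g) x‖ ≤ (V.map fun u => ‖u‖).prod * C := by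
        intro x
        rw [fderiv_iterDiff V g hg x]
        exact ih (fderiv ℝ g) C (hg.fderiv_right (m := (⊤ : ℕ∞)) (by exact_mod_cast le_top)) hC' x
      have hmv : ‖iterDiff V g (p + u) - iterDiff V g p‖ ≤
          ((V.map fun u => ‖u‖).prod * C) * ‖(p + u) - p‖ := by
        refine Convex.norm_image_sub_le_of_norm_fderiv_le
          (fun x _ => hd x) (fun x _ => hfd x) convex_univ (Set.mem_univ _) (Set.mem_univ _)
      have hu : ‖(p + u) - p‖ = ‖u‖ := by
        congr 1; abel
      calc ‖iterDiff (u :: V) g p‖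
          = ‖iterDiff V g (p + u) - iterDiff V g p‖ := rfl
        _ ≤ ((V.map fun u => ‖u‖).prod * C) * ‖u‖ := by rw [← hu]; exact hmv
        _ = ((u :: V).map fun u => ‖u‖).prod * C := by
            simp [List.prod_cons]; ring

variable {V' : Type*} [NormedAddCommGroup V'] [NormedSpace ℝ V']

/-- Pairing of a pointed chain with a scalar function `g` and a functional `ℓ`. -/
noncomputable def pairing (g : E' → ℝ) (ℓ : V' →L[ℝ] ℝ) : (E' →₀ V') →ₗ[ℝ] ℝ :=
  Finsupp.lsum ℝ (fun q => g q • (ℓ : V' →ₗ[ℝ] ℝ))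

lemma pairing_apply (g : E' → ℝ) (ℓ : V' →L[ℝ] ℝ) (A : E' →₀ V') :
    pairing g ℓ A = A.sum fun q v => g q * ℓ v := by
  simp [pairing, Finsupp.lsum_apply, Finsupp.sum]

lemma pairing_single (g : E' → ℝ) (ℓ : V' →L[ℝ] ℝ) (p : E') (α : V') :
    pairing g ℓ (Finsupp.single p α) = g p * ℓ α := by
  simp [pairing]

lemma pairing_mapDomain (g : E' → ℝ) (ℓ : V' →L[ℝ] ℝ) (u : E') (B : E' →₀ V') :
    pairing g ℓ (Finsupp.mapDomain (· + u) B) = pairing (fun y => g (y + u)) ℓ B := by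
  rw [pairing_apply, pairing_apply]
  exact Finsupp.sum_mapDomain_index (by simp) (by intro a b₁ b₂; simp [mul_add])

lemma pairing_diffChain (U : List E') (ℓ : V' →L[ℝ] ℝ) :
    ∀ (g : E' → ℝ) (p : E') (α : V'),
      pairing g ℓ (diffChain U p α) = iterDiff U g p * ℓ α := by
  induction U with
  | nil => intro g p α; simp [diffChain, iterDiff, pairing_single]
  | cons u V ih =>
      intro g p α
      rw [diffChain, map_sub, pairing_mapDomain, ih, ih, iterDiff_comp_add]
      simp [iterDiff, sub_mul]

end Aux

/-- For every nonzero pointed chain `A` on `ℝⁿ` and every `r ≥ 0`, the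
`r`-norm of `A` is strictly positive; in particular `‖·‖_{B^r}` is a norm. -/
theorem Bnorm_pos {n : ℕ} {V : Type*} [NormedAddCommGroup V] [NormedSpace ℝ V]
    (r : ℕ) (A : EuclideanSpace ℝ (Fin n) →₀ V) (hA : A ≠ 0) :
    0 < Bnorm r A := by
  classical
  -- pick a point in the support
  obtain ⟨p₀, hp₀⟩ : ∃ p, p ∈ A.support := by
    rcases Finset.nonempty_iff_ne_empty.2 (fun h => hA (Finsupp.support_eq_empty.1 h)) with ⟨p, hp⟩
    exact ⟨p, hp⟩
  have hα₀ : A p₀ ≠ 0 := Finsupp.mem_support_iff.1 hp₀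
  -- dual functional
  obtain ⟨ℓ, hℓ1, hℓα⟩ := exists_dual_vector ℝ (A p₀) (norm_ne_zero_iff.2 hα₀)
  -- a bump function at p₀ vanishing on the rest of the support
  have hdpos : ∀ q ∈ A.support.erase p₀, 0 < dist p₀ q := by
    intro q hq
    have : q ≠ p₀ := Finset.ne_of_mem_erase hq
    simpa [dist_pos] using this.symm
  set S := A.support.erase p₀ with hS
  obtain ⟨d, hd0, hd⟩ : ∃ d : ℝ, 0 < d ∧ ∀ q ∈ S, d ≤ dist p₀ q := by
    by_cases hSe : S.Nonempty
    · refine ⟨S.inf' hSe (fun q => dist p₀ q), ?_, ?_⟩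
      · rcases Finset.exists_mem_eq_inf' hSe (fun q => dist p₀ q) with ⟨q, hq, hqeq⟩
        rw [hqeq]; exact hdpos q hq
      · intro q hq; exact Finset.inf'_le _ hq
    · exact ⟨1, one_pos, fun q hq => absurd ⟨q, hq⟩ hSe⟩
  set f : ContDiffBump p₀ := ⟨d / 2, d, half_pos hd0, half_lt_self hd0⟩
  have hf1 : (f : EuclideanSpace ℝ (Fin n) → ℝ) p₀ = 1 := f.one_of_mem_closedBall (Metric.mem_closedBall_self (half_pos hd0).le)
  have hf0 : ∀ q ∈ S, (f : EuclideanSpace ℝ (Fin n) → ℝ) q = 0 := by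
    intro q hq
    apply f.zero_of_le_dist
    rw [dist_comm]
    exact hd q hq
  -- uniform bound on derivatives of f up to order r
  have hbd : ∀ j : ℕ, ∃ C : ℝ, ∀ x, ‖iteratedFDeriv ℝ j (f : EuclideanSpace ℝ (Fin n) → ℝ) x‖ ≤ C := by
    intro j
    have h1 : Continuous (iteratedFDeriv ℝ j (f : EuclideanSpace ℝ (Fin n) → ℝ)) :=
      (f.contDiff (n := (⊤ : ℕ∞))).continuous_iteratedFDeriv (by exact_mod_cast le_top)
    have h2 : HasCompactSupport (iteratedFDeriv ℝ j (f : EuclideanSpace ℝ (Fin n) → ℝ)) :=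
      f.hasCompactSupport.iteratedFDeriv j
    obtain ⟨C, hC⟩ := h2.exists_bound_of_continuous h1
    exact ⟨C, hC⟩
  choose Cf hCf using hbd
  set C : ℝ := max 1 ((Finset.range (r + 1)).sup' (by simp) Cf) with hC
  have hC1 : (1 : ℝ) ≤ C := le_max_left _ _
  have hC0 : 0 < C := lt_of_lt_of_le one_pos hC1
  have hCbd : ∀ j ≤ r, ∀ x, ‖iteratedFDeriv ℝ j (f : EuclideanSpace ℝ (Fin n) → ℝ) x‖ ≤ C := by
    intro j hj x
    refine le_trans (hCf j x) (le_trans ?_ (le_max_right _ _))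
    exact Finset.le_sup' Cf (Finset.mem_range.2 (Nat.lt_succ_of_le hj))
  -- the pairing of A with (f, ℓ)
  have hpairA : pairing (f : EuclideanSpace ℝ (Fin n) → ℝ) ℓ A = ‖A p₀‖ := by
    rw [pairing_apply, Finsupp.sum]
    rw [← Finset.add_sum_erase _ _ hp₀]
    have : ∀ q ∈ S, (f : EuclideanSpace ℝ (Fin n) → ℝ) q * ℓ (A q) = 0 := by
      intro q hq; rw [hf0 q hq, zero_mul]
    rw [Finset.sum_congr rfl this]
    simp [hf1, hℓα]
  have hApos : 0 < ‖A p₀‖ := norm_pos_iff.2 hα₀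
  have abs_list_sum_le : ∀ l : List ℝ, |l.sum| ≤ (l.map fun x => |x|).sum := by
    intro l
    induction l with
    | nil => simp
    | cons a l ih =>
        simp only [List.sum_cons, List.map_cons]
        exact le_trans (abs_add_le a l.sum) (by linarith)
  -- lower bound on all decompositions
  have key : ∀ s ∈ {s : ℝ | ∃ L : List (List (EuclideanSpace ℝ (Fin n)) × EuclideanSpace ℝ (Fin n) × V),
      (∀ t ∈ L, t.1.length ≤ r) ∧
      A = (L.map fun t => diffChain t.1 t.2.1 t.2.2).sum ∧
      s = (L.map fun t => dweight t.1 t.2.2).sum}, ‖A p₀‖ / C ≤ s := by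
    rintro s ⟨L, hLr, hLsum, rfl⟩
    have hbound : ∀ t ∈ L, |pairing (f : EuclideanSpace ℝ (Fin n) → ℝ) ℓ (diffChain t.1 t.2.1 t.2.2)| ≤
        C * dweight t.1 t.2.2 := by
      rintro ⟨U, p, α⟩ ht
      rw [pairing_diffChain, abs_mul]
      have h1 : ‖iterDiff U (f : EuclideanSpace ℝ (Fin n) → ℝ) p‖ ≤ (U.map fun u => ‖u‖).prod * C :=
        iterDiff_bound U (f : EuclideanSpace ℝ (Fin n) → ℝ) C (f.contDiff)
          (hCbd U.length (hLr _ ht)) p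
      have h2 : |ℓ α| ≤ ‖α‖ := by
        calc |ℓ α| = ‖ℓ α‖ := rfl
          _ ≤ ‖ℓ‖ * ‖α‖ := ℓ.le_opNorm α
          _ = ‖α‖ := by rw [hℓ1, one_mul]
      calc |iterDiff U (f : EuclideanSpace ℝ (Fin n) → ℝ) p| * |ℓ α|
          ≤ ((U.map fun u => ‖u‖).prod * C) * ‖α‖ :=
            mul_le_mul (by simpa using h1) h2 (abs_nonneg _)
              (mul_nonneg (List.prod_nonneg (by simp)) hC0.le)
        _ = C * dweight U α := by rw [dweight]; ring
    have habs : ‖A p₀‖ ≤ C * (L.map fun t => dweight t.1 t.2.2).sum := by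
      have hrw : pairing (f : EuclideanSpace ℝ (Fin n) → ℝ) ℓ A =
          (L.map fun t => pairing (f : EuclideanSpace ℝ (Fin n) → ℝ) ℓ (diffChain t.1 t.2.1 t.2.2)).sum := by
        rw [hLsum, map_list_sum, List.map_map]
        rfl
      calc ‖A p₀‖ = |pairing (f : EuclideanSpace ℝ (Fin n) → ℝ) ℓ A| := by rw [hpairA, abs_of_nonneg hApos.le]
        _ = |(L.map fun t => pairing (f : EuclideanSpace ℝ (Fin n) → ℝ) ℓ (diffChain t.1 t.2.1 t.2.2)).sum| := by
            rw [hrw]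
        _ ≤ (L.map fun t => |pairing (f : EuclideanSpace ℝ (Fin n) → ℝ) ℓ (diffChain t.1 t.2.1 t.2.2)|).sum := by
            simpa [List.map_map, Function.comp_def] using
              abs_list_sum_le (L.map fun t => pairing (f : EuclideanSpace ℝ (Fin n) → ℝ) ℓ (diffChain t.1 t.2.1 t.2.2))
        _ ≤ (L.map fun t => C * dweight t.1 t.2.2).sum := List.sum_le_sum hbound
        _ = C * (L.map fun t => dweight t.1 t.2.2).sum := by
            rw [← List.sum_map_mul_left]
    rw [div_le_iff₀ hC0]
    calc ‖A p₀‖ ≤ C * (L.map fun t => dweight t.1 t.2.2).sum := habs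
      _ = (L.map fun t => dweight t.1 t.2.2).sum * C := mul_comm _ _
  -- the set of decompositions is nonempty
  have hne : Set.Nonempty {s : ℝ | ∃ L : List (List (EuclideanSpace ℝ (Fin n)) × EuclideanSpace ℝ (Fin n) × V),
      (∀ t ∈ L, t.1.length ≤ r) ∧
      A = (L.map fun t => diffChain t.1 t.2.1 t.2.2).sum ∧
      s = (L.map fun t => dweight t.1 t.2.2).sum} := by
    refine ⟨_, A.support.toList.map (fun p => (([] : List (EuclideanSpace ℝ (Fin n))), p, A p)), ?_, ?_, rfl⟩
    · rintro ⟨U, p, α⟩ ht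
      simp only [List.mem_map] at ht
      obtain ⟨q, _, hq⟩ := ht
      cases hq
      simp
    · rw [List.map_map]
      have : ((fun t : List (EuclideanSpace ℝ (Fin n)) × EuclideanSpace ℝ (Fin n) × V => diffChain t.1 t.2.1 t.2.2) ∘
          fun p => (([] : List (EuclideanSpace ℝ (Fin n))), p, A p)) = fun p => Finsupp.single p (A p) := by
        funext p; rfl
      rw [this, Finset.sum_map_toList]
      exact (Finsupp.sum_single A).symm
  have hpos : 0 < ‖A p₀‖ / C := div_pos hApos hC0
  rw [Bnorm]
  exact lt_of_lt_of_le hpos (le_csInf hne key)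
end
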